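/- Let $X \subseteq \mathbb{R}^m$ and $Y \subseteq \mathbb{R}$ be bounded open sets, $c \in C^2(\bar X \times \bar Y)$, and let $\mu, \nu$ be absolutely continuous probability measures on $\bar X$ and $\bar Y$ respectively. If the minimal mass difference satisfies $D^{min}_\mu(y_0,y_1,k(y_0)) < \nu([y_0,y_1])$ for all $y_0 < y_1$ in $Y$, where $k(y)$ is the mass-splitting level defined by $\mu(X_{\geq}(y,k(y))) = \nu((-\infty,y])$, then the model $(c,\mu,\nu)$ is nested, i.e., for all $y_0 < y_1$ with $\nu([y_0,y_1]) > 0$ one has $X_{\geq}(y_0,k(y_0)) \subseteq X_{>}(y_1,k(y_1))$. -/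

import Mathlib

open MeasureTheory Set

noncomputable section

/-- Super-level set `X_{≥}(y,k)` of `∂_y c(·,y)` within `X`. -/
def Xge {m : ℕ} (X : Set (EuclideanSpace ℝ (Fin m)))
    (c : EuclideanSpace ℝ (Fin m) → ℝ → ℝ) (y k : ℝ) : Set (EuclideanSpace ℝ (Fin m)) :=
  {x ∈ X | k ≤ deriv (c x) y}

/-- Level set `X_{=}(y,k)`. -/
def Xeq {m : ℕ} (X : Set (EuclideanSpace ℝ (Fin m)))
    (c : EuclideanSpace ℝ (Fin m) → ℝ → ℝ) (y k : ℝ) : Set (EuclideanSpace ℝ (Fin m)) :=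
  {x ∈ X | deriv (c x) y = k}

/-- Strict super-level set `X_{>}(y,k) = X_{≥}(y,k) \ X_{=}(y,k)`. -/
def Xgt {m : ℕ} (X : Set (EuclideanSpace ℝ (Fin m)))
    (c : EuclideanSpace ℝ (Fin m) → ℝ → ℝ) (y k : ℝ) : Set (EuclideanSpace ℝ (Fin m)) :=
  Xge X c y k \ Xeq X c y k

/-- `k_max(y₀,y₁,k₀) = sup{k : X_{≥}(y₀,k₀) ⊆ X_{≥}(y₁,k)}`. -/
def kmax {m : ℕ} (X : Set (EuclideanSpace ℝ (Fin m)))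
    (c : EuclideanSpace ℝ (Fin m) → ℝ → ℝ) (y0 y1 k0 : ℝ) : ℝ :=
  sSup {k : ℝ | Xge X c y0 k0 ⊆ Xge X c y1 k}

/-- Minimal mass difference `D^{min}_μ(y₀,y₁,k₀)`. -/
def Dmin {m : ℕ} (μ : Measure (EuclideanSpace ℝ (Fin m)))
    (X : Set (EuclideanSpace ℝ (Fin m))) (c : EuclideanSpace ℝ (Fin m) → ℝ → ℝ)
    (y0 y1 k0 : ℝ) : ENNReal :=
  μ (Xge X c y1 (kmax X c y0 y1 k0) \ Xge X c y0 k0)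

/-- The model `(c,μ,ν)` is nested. -/
def Nested {m : ℕ} (ν : Measure ℝ) (X : Set (EuclideanSpace ℝ (Fin m)))
    (c : EuclideanSpace ℝ (Fin m) → ℝ → ℝ) (Y : Set ℝ) (k : ℝ → ℝ) : Prop :=
  ∀ y0 ∈ Y, ∀ y1 ∈ Y, y0 < y1 → 0 < ν (Icc y0 y1) →
    Xge X c y0 (k y0) ⊆ Xgt X c y1 (k y1)

lemma cont_deriv_aux {m : ℕ} (c : EuclideanSpace ℝ (Fin m) → ℝ → ℝ)
    (hc : ContDiff ℝ 2 (fun p : EuclideanSpace ℝ (Fin m) × ℝ => c p.1 p.2)) (y : ℝ) :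
    Continuous fun x => deriv (c x) y := by
  have hd : ∀ x : EuclideanSpace ℝ (Fin m), deriv (c x) y
      = fderiv ℝ (fun p : EuclideanSpace ℝ (Fin m) × ℝ => c p.1 p.2) (x, y) (0, 1) := by
    intro x
    have h1 : HasFDerivAt (fun p : EuclideanSpace ℝ (Fin m) × ℝ => c p.1 p.2)
        (fderiv ℝ (fun p : EuclideanSpace ℝ (Fin m) × ℝ => c p.1 p.2) (x, y)) (x, y) :=
      (hc.differentiable (by norm_num) (x, y)).hasFDerivAt
    have h2 : HasDerivAt (fun t : ℝ => ((x : EuclideanSpace ℝ (Fin m)), t)) (0, 1) y :=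
      (hasDerivAt_const y x).prodMk (hasDerivAt_id y)
    exact (h1.comp_hasDerivAt y h2).deriv
  simp only [hd]
  exact ((hc.continuous_fderiv (by norm_num)).comp
    (continuous_id.prodMk continuous_const)).clm_apply continuous_const


theorem stmt0 {m : ℕ} (X : Set (EuclideanSpace ℝ (Fin m))) (Y : Set ℝ)
    (hXopen : IsOpen X) (hXbdd : Bornology.IsBounded X)
    (hYopen : IsOpen Y) (hYbdd : Bornology.IsBounded Y)
    (c : EuclideanSpace ℝ (Fin m) → ℝ → ℝ)
    (hc : ContDiff ℝ 2 (fun p : EuclideanSpace ℝ (Fin m) × ℝ => c p.1 p.2))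
    (μ : Measure (EuclideanSpace ℝ (Fin m))) (ν : Measure ℝ)
    [IsProbabilityMeasure μ] [IsProbabilityMeasure ν]
    (hμac : μ ≪ volume) (hνac : ν ≪ volume)
    (hμsupp : μ (closure X) = 1) (hνsupp : ν (closure Y) = 1)
    (k : ℝ → ℝ)
    (hk : ∀ y ∈ Y, μ (Xge X c y (k y)) = ν (Iic y))
    (h : ∀ y0 ∈ Y, ∀ y1 ∈ Y, y0 < y1 →
      Dmin μ X c y0 y1 (k y0) < ν (Icc y0 y1)) :
    Nested ν X c Y k := by
  intro y0 hy0 y1 hy1 h01 hνpos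
  by_cases hne : (Xge X c y0 (k y0)).Nonempty
  swap
  · intro x hx; exact absurd ⟨x, hx⟩ hne
  obtain ⟨x0, hx0⟩ := hne
  have hg1 : Continuous fun x => deriv (c x) y1 := cont_deriv_aux c hc y1
  -- the set defining kmax
  set S : Set ℝ := {k' : ℝ | Xge X c y0 (k y0) ⊆ Xge X c y1 k'} with hS
  have hXne : (closure X).Nonempty := ⟨x0, subset_closure hx0.1⟩
  have hXcpt : IsCompact (closure X) :=
    Metric.isCompact_of_isClosed_isBounded isClosed_closure hXbdd.closure
  obtain ⟨z, hz, hzmin⟩ := hXcpt.exists_isMinOn hXne (hg1.continuousOn)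
  have hSne : S.Nonempty := by
    refine ⟨deriv (c z) y1, fun x hx => ⟨hx.1, hzmin (subset_closure hx.1)⟩⟩
  have hSbdd : BddAbove S := by
    refine ⟨deriv (c x0) y1, fun k' hk' => (hk' hx0).2⟩
  have hsub : Xge X c y0 (k y0) ⊆ Xge X c y1 (kmax X c y0 y1 (k y0)) := by
    intro x hx
    exact ⟨hx.1, csSup_le hSne (fun k' hk' => (hk' hx).2)⟩
  -- measurability
  have hmeas : ∀ y k', MeasurableSet (Xge X c y k') := by
    intro y k'
    have : Xge X c y k' = X ∩ (fun x => deriv (c x) y) ⁻¹' Ici k' := rfl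
    rw [this]
    exact hXopen.measurableSet.inter
      ((isClosed_Ici.preimage (cont_deriv_aux c hc y)).measurableSet)
  -- ν(Icc) = ν(Ioc)
  have hν0 : ν {y0} = 0 := hνac (Real.volume_singleton)
  have hIcc : ν (Icc y0 y1) = ν (Ioc y0 y1) := by
    apply le_antisymm
    · calc ν (Icc y0 y1) = ν (insert y0 (Ioc y0 y1)) := by rw [Ioc_insert_left h01.le]
        _ ≤ ν {y0} + ν (Ioc y0 y1) := by
            rw [insert_eq]; exact measure_union_le _ _
        _ = ν (Ioc y0 y1) := by rw [hν0, zero_add]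
    · exact measure_mono Ioc_subset_Icc_self
  have hIic : ν (Ioc y0 y1) + ν (Iic y0) = ν (Iic y1) := by
    rw [add_comm, ← measure_union (Iic_disjoint_Ioc le_rfl) measurableSet_Ioc,
      Iic_union_Ioc_eq_Iic h01.le]
  -- key claim : k y1 < kmax
  have hkm : k y1 < kmax X c y0 y1 (k y0) := by
    by_contra hle
    push_neg at hle
    have hmono : Xge X c y1 (k y1) ⊆ Xge X c y1 (kmax X c y0 y1 (k y0)) :=
      fun x hx => ⟨hx.1, hle.trans hx.2⟩
    have hmass : μ (Xge X c y1 (kmax X c y0 y1 (k y0)))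
        = Dmin μ X c y0 y1 (k y0) + μ (Xge X c y0 (k y0)) := by
      have := measure_diff_add_inter (Xge X c y1 (kmax X c y0 y1 (k y0)))
        (hmeas y0 (k y0)) (μ := μ)
      rw [inter_eq_self_of_subset_right hsub] at this
      exact this.symm
    have h1 : ν (Iic y1) ≤ Dmin μ X c y0 y1 (k y0) + ν (Iic y0) := by
      rw [← hk y1 hy1, ← hk y0 hy0, ← hmass]
      exact measure_mono hmono
    have h2 : Dmin μ X c y0 y1 (k y0) + ν (Iic y0) < ν (Icc y0 y1) + ν (Iic y0) :=
      ENNReal.add_lt_add_right (measure_ne_top ν _) (h y0 hy0 y1 hy1 h01)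
    rw [hIcc, hIic] at h2
    exact absurd (h1.trans_lt h2) (lt_irrefl _)
  -- conclude
  intro x hx
  have hx1 := hsub hx
  have hlt : k y1 < deriv (c x) y1 := hkm.trans_le hx1.2
  exact ⟨⟨hx1.1, hlt.le⟩, fun heq => absurd heq.2 hlt.ne'⟩


end
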